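/- Let (x, y) ∈ ℝ² with x ≠ 0 and y ≠ 0. Then there exists at least one α > 0 such that F(α) = 0, where F(α) := y²(1 + x²/α) − P(x² + α + b). -/

import Mathlib

open Filter Topology

private lemma prod_tendsto_atTop {m : ℕ} (a : Fin m → ℝ) :
    Tendsto (fun w : ℝ => w * ∏ j, (w + a j)) atTop atTop := by
  have key : ∀ s : Finset (Fin m),
      Tendsto (fun w : ℝ => w * ∏ j ∈ s, (w + a j)) atTop atTop := by
    intro s
    induction s using Finset.induction with
    | empty => simp only [Finset.prod_empty, mul_one]; exact tendsto_id
    | @insert i s hi ih =>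
      have h1 : Tendsto (fun w : ℝ => w + a i) atTop atTop :=
        tendsto_atTop_add_const_right _ _ tendsto_id
      have := ih.atTop_mul_atTop₀ h1
      refine this.congr (fun w => ?_)
      rw [Finset.prod_insert hi]; ring
  exact key Finset.univ

theorem statement9 (n : ℕ) (hn : 3 ≤ n) (a : Fin (n - 2) → ℝ) (b : ℝ)
    (P : ℝ → ℝ) (hP : ∀ x : ℝ, P x = x * ∏ j, (x + a j))
    (x y : ℝ) (hx : x ≠ 0) (hy : y ≠ 0) :
    ∃ α : ℝ, 0 < α ∧ y ^ 2 * (1 + x ^ 2 / α) - P (x ^ 2 + α + b) = 0 := by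
  set F : ℝ → ℝ := fun α => y ^ 2 * (1 + x ^ 2 / α) - P (x ^ 2 + α + b) with hF
  have hPc : Continuous P := by
    have : P = fun w : ℝ => w * ∏ j, (w + a j) := funext hP
    rw [this]; continuity
  -- F tends to atBot at atTop
  have hPtop : Tendsto (fun α : ℝ => P (x ^ 2 + α + b)) atTop atTop := by
    have h1 : Tendsto (fun α : ℝ => x ^ 2 + α + b) atTop atTop := by
      have := tendsto_atTop_add_const_left atTop (x ^ 2) (tendsto_id (α := ℝ) (x := atTop))
      exact tendsto_atTop_add_const_right _ b this
    have := (prod_tendsto_atTop a).comp h1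
    refine this.congr (fun α => ?_)
    simp [hP]
  have hbot : Tendsto F atTop atBot := by
    have h1 : Tendsto (fun α : ℝ => y ^ 2 * (1 + x ^ 2 / α)) atTop (𝓝 (y ^ 2 * (1 + 0))) := by
      refine Tendsto.const_mul _ (Tendsto.const_add _ ?_)
      exact Tendsto.div_atTop tendsto_const_nhds tendsto_id
    have h2 : Tendsto (fun α : ℝ => -(P (x ^ 2 + α + b))) atTop atBot :=
      tendsto_neg_atTop_atBot.comp hPtop
    have := h1.add_atBot h2
    refine this.congr (fun α => ?_); ring
  -- F tends to atTop near 0 from the right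
  have htop : Tendsto F (𝓝[>] (0:ℝ)) atTop := by
    have h1 : Tendsto (fun α : ℝ => x ^ 2 / α) (𝓝[>] (0:ℝ)) atTop := by
      have hx2 : 0 < x ^ 2 := by positivity
      have := tendsto_inv_nhdsGT_zero.const_mul_atTop hx2
      refine this.congr (fun α => ?_); rw [div_eq_mul_inv]
    have hy2 : 0 < y ^ 2 := by positivity
    have h2 : Tendsto (fun α : ℝ => y ^ 2 * (1 + x ^ 2 / α)) (𝓝[>] (0:ℝ)) atTop :=
      ((tendsto_atTop_add_const_left _ 1 h1).const_mul_atTop hy2)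
    have h3 : Tendsto (fun α : ℝ => -(P (x ^ 2 + α + b))) (𝓝[>] (0:ℝ))
        (𝓝 (-(P (x ^ 2 + 0 + b)))) := by
      refine Tendsto.neg ?_
      refine (hPc.tendsto _).comp ?_
      have h4 : Continuous (fun α : ℝ => x ^ 2 + α + b) := by continuity
      exact (h4.tendsto 0).mono_left nhdsWithin_le_nhds
    have := h2.atTop_add h3
    refine (this.congr (fun α => ?_)) |>.mono_left le_rfl
    simp [hF]; ring
  -- pick points
  obtain ⟨α₀, hα₀mem, hα₀pos⟩ : ∃ α₀, α₀ ∈ Set.Ioi (0:ℝ) ∧ 0 < F α₀ := by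
    have h := htop.eventually (eventually_gt_atTop 0)
    have h2 := h.and self_mem_nhdsWithin
    rcases h2.exists with ⟨α₀, h1, h2⟩
    exact ⟨α₀, h2, h1⟩
  obtain ⟨α₁, hα₁gt, hα₁neg⟩ : ∃ α₁, α₀ < α₁ ∧ F α₁ < 0 := by
    have h := (hbot.eventually (eventually_lt_atBot 0)).and (eventually_gt_atTop α₀)
    rcases h.exists with ⟨α₁, h1, h2⟩
    exact ⟨α₁, h2, h1⟩
  have hα₀ : (0:ℝ) < α₀ := hα₀mem
  have hcont : ContinuousOn F (Set.Icc α₀ α₁) := by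
    have hsub : Set.Icc α₀ α₁ ⊆ {t : ℝ | t ≠ 0} := by
      intro t ht; exact ne_of_gt (lt_of_lt_of_le hα₀ ht.1)
    refine ContinuousOn.sub ?_ ((hPc.comp (by continuity)).continuousOn)
    refine ContinuousOn.mul continuousOn_const (ContinuousOn.add continuousOn_const ?_)
    exact ContinuousOn.div continuousOn_const continuousOn_id (fun t ht => hsub ht)
  have := intermediate_value_Icc' (le_of_lt hα₁gt) hcont
  have h0 : (0:ℝ) ∈ Set.Icc (F α₁) (F α₀) := ⟨le_of_lt hα₁neg, le_of_lt hα₀pos⟩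
  obtain ⟨α, hαmem, hα⟩ := this h0
  exact ⟨α, lt_of_lt_of_le hα₀ hαmem.1, hα⟩
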